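/- The Kerdock code is (1/√N)-incoherent: for any α, β ∈ 𝔽(2ⁿ), ℓ, ℓ' ∈ ℤ₂ⁿ, and ε, ε' ∈ ℤ₄ with (α, ℓ) ≠ (β, ℓ'), the exponentiated codewords built from the trace-Kerdock matrices satisfy |⟨φ_{K_α,ℓ,ε}, φ_{K_β,ℓ',ε'}⟩| ≤ 2^{−n/2} = 1/√N. -/

import Mathlib

open Matrix

/-- The exponentiated ℤ₄-RM(2,n) codeword φ_{Q,ℓ,ε} ∈ ℂ^{2ⁿ}, indexed by y ∈ {0,1}ⁿ:
φ_{Q,ℓ,ε}(y) = 2^{-n/2}·i^{yᵀQy + 2ℓᵀy + ε}, entries lifted to {0,1} ⊆ ℤ. -/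
noncomputable def rmPhi (n : ℕ) (Q : Matrix (Fin n) (Fin n) (ZMod 2))
    (ℓ : Fin n → ZMod 2) (ε : ZMod 4) (y : Fin n → ZMod 2) : ℂ :=
  (1 / Real.sqrt (2 ^ n)) *
    Complex.I ^ ((∑ j : Fin n, ∑ k : Fin n,
        ((y j).val : ℤ) * ((Q j k).val : ℤ) * ((y k).val : ℤ))
      + 2 * ∑ j : Fin n, ((ℓ j).val : ℤ) * ((y j).val : ℤ) + (ε.val : ℤ))

/-- The Hermitian inner product ⟨u,v⟩ = Σ_y u(y)·conj(v(y)). -/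
noncomputable def herm {ι : Type*} [Fintype ι] (u v : ι → ℂ) : ℂ :=
  ∑ y : ι, u y * (starRingEnd ℂ) (v y)

namespace K12
open Finset Polynomial

lemma zmod2_cases : ∀ a : ZMod 2, a = 0 ∨ a = 1 := by decide

lemma zmod2_ne_zero : ∀ a : ZMod 2, a ≠ 0 → a = 1 := by decide

lemma zmod2_sub_odd : ∀ a b : ZMod 2, a ≠ b → ((a.val : ℤ) - (b.val : ℤ)) % 2 = 1 := by decide

lemma zmod2_entry : ∀ a b : ZMod 2,
    (2 : ℤ) ∣ ((a.val : ℤ) - (b.val : ℤ) - (((a + b).val : ℤ))) := by decide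

lemma zmod2_intCast_val : ∀ a : ZMod 2, (((a.val : ℤ) : ZMod 2)) = a := by decide

variable {n : ℕ}

def vv (y : Fin n → ZMod 2) (j : Fin n) : ℤ := ((y j).val : ℤ)

lemma vv_add (y z : Fin n → ZMod 2) (j : Fin n) :
    vv (y + z) j = vv y j + vv z j - 2 * (vv y j * vv z j) := by
  have H : ∀ a b : ZMod 2, (((a + b).val : ℤ)) = (a.val : ℤ) + (b.val : ℤ)
      - 2 * ((a.val : ℤ) * (b.val : ℤ)) := by decide
  simpa [vv] using H (y j) (z j)

lemma vv_zero (j : Fin n) : vv (0 : Fin n → ZMod 2) j = 0 := by simp [vv]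

lemma sum_shift (f : (Fin n → ZMod 2) → ℂ) (e : Fin n → ZMod 2)
    (hf : ∀ z, f (z + e) = - f z) : ∑ z, f z = 0 := by
  have h1 : ∑ z, f (z + e) = ∑ z, f z :=
    Fintype.sum_equiv (Equiv.addRight e) _ _ fun z => rfl
  have h2 : ∑ z, f (z + e) = - ∑ z, f z := by
    rw [Finset.sum_congr rfl fun z _ => hf z, Finset.sum_neg_distrib]
  have h3 : (2 : ℂ) * ∑ z, f z = 0 := by linear_combination h1.symm.trans h2
  have := mul_eq_zero.mp h3
  simpa using this

lemma I_zpow_add (a b : ℤ) : Complex.I ^ (a + b) = Complex.I ^ a * Complex.I ^ b :=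
  zpow_add₀ Complex.I_ne_zero a b

lemma neg_one_zpow_add (a b : ℤ) : (-1 : ℂ) ^ (a + b) = (-1 : ℂ) ^ a * (-1 : ℂ) ^ b :=
  zpow_add₀ (by norm_num) a b

lemma I_zpow_two : Complex.I ^ (2 : ℤ) = -1 := by
  rw [show (2 : ℤ) = ((2 : ℕ) : ℤ) from rfl, zpow_natCast, Complex.I_sq]

lemma I_zpow_two_mul (r : ℤ) : Complex.I ^ (2 * r) = (-1 : ℂ) ^ r := by
  rw [_root_.zpow_mul, I_zpow_two]

lemma I_zpow_four_mul (k : ℤ) : Complex.I ^ (4 * k) = 1 := by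
  have h4 : Complex.I ^ (4 : ℤ) = 1 := by
    rw [show (4 : ℤ) = ((4 : ℕ) : ℤ) from rfl, zpow_natCast, Complex.I_pow_four]
  rw [_root_.zpow_mul, h4, _root_.one_zpow]

lemma neg_one_zpow_two_mul (k : ℤ) : (-1 : ℂ) ^ (2 * k) = 1 := by
  rw [_root_.zpow_mul]
  norm_num

lemma neg_one_zpow_congr {a b : ℤ} (hd : (2 : ℤ) ∣ a - b) : (-1 : ℂ) ^ a = (-1 : ℂ) ^ b := by
  obtain ⟨k, hk⟩ := hd
  have : a = b + 2 * k := by omega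
  rw [this, neg_one_zpow_add, neg_one_zpow_two_mul, mul_one]

lemma neg_one_zpow_odd {a : ℤ} (ha : a % 2 = 1) : (-1 : ℂ) ^ a = -1 := by
  have : (-1 : ℂ) ^ a = (-1 : ℂ) ^ (1 : ℤ) := neg_one_zpow_congr (by omega)
  simpa using this

lemma conj_I_zpow (m : ℤ) : (starRingEnd ℂ) (Complex.I ^ m) = Complex.I ^ (-m) := by
  rw [map_zpow₀, Complex.conj_I, _root_.zpow_neg, ← Complex.inv_I, _root_.inv_zpow]

lemma swap_sum (M : Fin n → Fin n → ℤ) (hM : ∀ j k, M j k = M k j) (f g : Fin n → ℤ) :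
    ∑ j, ∑ k, f j * M j k * g k = ∑ j, ∑ k, g j * M j k * f k := by
  rw [Finset.sum_comm]
  refine Finset.sum_congr rfl fun j _ => Finset.sum_congr rfl fun k _ => ?_
  rw [hM k j]; ring

lemma quad_expand (M : Fin n → Fin n → ℤ) (hM : ∀ j k, M j k = M k j)
    (z w : Fin n → ZMod 2) :
    ∃ s : ℤ, (∑ j, ∑ k, vv (z + w) j * M j k * vv (z + w) k)
      = (∑ j, ∑ k, vv z j * M j k * vv z k) + (∑ j, ∑ k, vv w j * M j k * vv w k)
        + 2 * (∑ j, ∑ k, vv z j * M j k * vv w k) + 4 * s := by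
  classical
  set p : Fin n → ℤ := fun j => vv z j * vv w j with hp
  refine ⟨(∑ j, ∑ k, p j * M j k * p k) - (∑ j, ∑ k, p j * M j k * (vv z k + vv w k)), ?_⟩
  have step1 : (∑ j, ∑ k, vv (z + w) j * M j k * vv (z + w) k)
      = ∑ j, ∑ k, ((vv z j * M j k * vv z k + vv w j * M j k * vv w k
          + vv z j * M j k * vv w k + vv w j * M j k * vv z k)
        - 2 * (p j * M j k * (vv z k + vv w k))
        - 2 * ((vv z j + vv w j) * M j k * p k)
        + 4 * (p j * M j k * p k)) := by
    refine Finset.sum_congr rfl fun j _ => Finset.sum_congr rfl fun k _ => ?_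
    rw [vv_add, vv_add]; simp only [hp]; ring
  have swap1 : ∑ j, ∑ k, vv w j * M j k * vv z k = ∑ j, ∑ k, vv z j * M j k * vv w k :=
    swap_sum M hM _ _
  have swap2 : ∑ j, ∑ k, (fun j => vv z j + vv w j) j * M j k * p k
      = ∑ j, ∑ k, p j * M j k * (fun j => vv z j + vv w j) k :=
    swap_sum M hM _ _
  simp only at swap2
  rw [step1]
  simp only [Finset.sum_add_distrib, Finset.sum_sub_distrib, ← Finset.mul_sum]
  rw [swap1] at *
  rw [swap2]
  ring

lemma lin_expand (d : Fin n → ℤ) (z w : Fin n → ZMod 2) :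
    ∑ j, d j * vv (z + w) j
      = (∑ j, d j * vv z j) + (∑ j, d j * vv w j) - 2 * ∑ j, d j * (vv z j * vv w j) := by
  have h1 : ∀ j, d j * vv (z + w) j
      = (d j * vv z j + d j * vv w j) - 2 * (d j * (vv z j * vv w j)) := fun j => by
    rw [vv_add]; ring
  rw [Finset.sum_congr rfl fun j _ => h1 j, Finset.sum_sub_distrib, Finset.sum_add_distrib,
    ← Finset.mul_sum]

def E (Q : Matrix (Fin n) (Fin n) (ZMod 2)) (ℓ : Fin n → ZMod 2) (ε : ZMod 4)
    (y : Fin n → ZMod 2) : ℤ :=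
  (∑ j : Fin n, ∑ k : Fin n, vv y j * ((Q j k).val : ℤ) * vv y k)
    + 2 * ∑ j : Fin n, ((ℓ j).val : ℤ) * vv y j + (ε.val : ℤ)

lemma rmPhi_eq (Q : Matrix (Fin n) (Fin n) (ZMod 2)) (ℓ : Fin n → ZMod 2) (ε : ZMod 4)
    (y : Fin n → ZMod 2) :
    rmPhi n Q ℓ ε y = (1 / ((Real.sqrt (2 ^ n) : ℝ) : ℂ)) * Complex.I ^ (E Q ℓ ε y) := rfl

lemma E_zero (Q : Matrix (Fin n) (Fin n) (ZMod 2)) (ℓ : Fin n → ZMod 2) (ε : ZMod 4) :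
    E Q ℓ ε 0 = (ε.val : ℤ) := by
  simp [E, vv]

lemma vv_single (j0 j : Fin n) :
    vv (Pi.single j0 1 : Fin n → ZMod 2) j = if j = j0 then 1 else 0 := by
  by_cases hj : j = j0
  · subst hj
    rw [if_pos rfl]
    show (((Pi.single j 1 : Fin n → ZMod 2) j).val : ℤ) = 1
    rw [Pi.single_eq_same]
    rfl
  · rw [if_neg hj]
    show (((Pi.single j0 1 : Fin n → ZMod 2) j).val : ℤ) = 0
    rw [Pi.single_eq_of_ne hj]
    rfl

lemma sum_single_left (g : Fin n → ℤ) (j0 : Fin n) :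
    ∑ j, vv (Pi.single j0 1 : Fin n → ZMod 2) j * g j = g j0 := by
  rw [Finset.sum_congr rfl fun j _ => by rw [vv_single j0 j]]
  simp [ite_mul]

lemma sum_single_right (d : Fin n → ℤ) (j0 : Fin n) :
    ∑ j, d j * vv (Pi.single j0 1 : Fin n → ZMod 2) j = d j0 := by
  rw [Finset.sum_congr rfl fun j _ => by rw [vv_single j0 j]]
  simp [mul_ite]

lemma D_decomp (Kα Kβ : Matrix (Fin n) (Fin n) (ZMod 2))
    (hA : ∀ j k, Kα j k = Kα k j) (hB : ∀ j k, Kβ j k = Kβ k j)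
    (ℓ ℓ' : Fin n → ZMod 2) (ε ε' : ZMod 4) (z w : Fin n → ZMod 2) :
    ∃ s : ℤ, (E Kα ℓ ε (z + w) - E Kβ ℓ' ε' (z + w)) - (E Kα ℓ ε z - E Kβ ℓ' ε' z)
      = ((E Kα ℓ ε w - E Kβ ℓ' ε' w) - ((ε.val : ℤ) - (ε'.val : ℤ)))
        + 2 * ((∑ j, ∑ k, vv z j * ((Kα j k).val : ℤ) * vv w k)
              - (∑ j, ∑ k, vv z j * ((Kβ j k).val : ℤ) * vv w k))
        + 4 * s := by
  obtain ⟨sA, hsA⟩ := quad_expand (fun j k => ((Kα j k).val : ℤ)) (fun j k => by simp only [hA j k]) z w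
  obtain ⟨sB, hsB⟩ := quad_expand (fun j k => ((Kβ j k).val : ℤ)) (fun j k => by simp only [hB j k]) z w
  have hlA := lin_expand (fun j => ((ℓ j).val : ℤ)) z w
  have hlB := lin_expand (fun j => ((ℓ' j).val : ℤ)) z w
  refine ⟨(sA - sB) - (∑ j, ((ℓ j).val : ℤ) * (vv z j * vv w j))
      + (∑ j, ((ℓ' j).val : ℤ) * (vv z j * vv w j)), ?_⟩
  simp only [E]
  linear_combination hsA - hsB + 2 * hlA - 2 * hlB

lemma inner_sum (g : Fin n → ℤ) (j0 : Fin n) (hodd : g j0 % 2 = 1) :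
    ∑ z : Fin n → ZMod 2, (-1 : ℂ) ^ (∑ j, vv z j * g j) = 0 := by
  classical
  apply sum_shift _ (Pi.single j0 1)
  intro z
  have key : ∑ j, vv (z + Pi.single j0 1) j * g j
      = (∑ j, vv z j * g j) + (g j0 + 2 * (- ∑ j, (vv z j * vv (Pi.single j0 1) j) * g j)) := by
    have h1 : ∀ j, vv (z + Pi.single j0 1) j * g j
        = (vv z j * g j + vv (Pi.single j0 1) j * g j)
          - 2 * ((vv z j * vv (Pi.single j0 1) j) * g j) := fun j => by rw [vv_add]; ring
    rw [Finset.sum_congr rfl fun j _ => h1 j, Finset.sum_sub_distrib, Finset.sum_add_distrib,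
      ← Finset.mul_sum, sum_single_left]
    ring
  rw [key, neg_one_zpow_add, neg_one_zpow_add, neg_one_zpow_two_mul, neg_one_zpow_odd hodd]
  ring

lemma ker_triv (n : ℕ) (hn : 1 ≤ n) (h : Polynomial (ZMod 2))
    (hmonic : h.Monic) (hdeg : h.natDegree = n) (hirr : Irreducible h)
    (γ : AdjoinRoot h) (hγ : γ ≠ 0) (Q : Matrix (Fin n) (Fin n) (ZMod 2))
    (hQ : ∀ j k : Fin n, algebraMap (ZMod 2) (AdjoinRoot h) (Q j k)
        = ∑ i ∈ Finset.range n, (γ * (AdjoinRoot.root h) ^ ((j : ℕ) + (k : ℕ))) ^ (2 ^ i))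
    (v : Fin n → ZMod 2) (hv : ∀ j, ∑ k, Q j k * v k = 0) : v = 0 := by
  classical
  haveI := Fact.mk hirr
  haveI : CharP (AdjoinRoot h) 2 :=
    charP_of_injective_algebraMap (algebraMap (ZMod 2) (AdjoinRoot h)).injective 2
  set ξ : AdjoinRoot h := AdjoinRoot.root h with hξ
  set c : Fin n → AdjoinRoot h := fun k => algebraMap (ZMod 2) (AdjoinRoot h) (v k) with hc
  have hc_pow : ∀ (k : Fin n) (m : ℕ), c k ^ (2 ^ m) = c k := by
    intro k m
    rcases zmod2_cases (v k) with h0 | h1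
    · simp [hc, h0, zero_pow (Nat.two_pow_pos m).ne']
    · simp [hc, h1]
  set w : AdjoinRoot h := ∑ k : Fin n, c k * ξ ^ (k : ℕ) with hw
  set T : AdjoinRoot h → AdjoinRoot h := fun x => ∑ i ∈ Finset.range n, x ^ (2 ^ i) with hT
  have claim1 : ∀ j : Fin n, T (γ * ξ ^ (j : ℕ) * w) = 0 := by
    intro j
    have expand : T (γ * ξ ^ (j : ℕ) * w)
        = ∑ k : Fin n, c k * (∑ i ∈ Finset.range n, (γ * ξ ^ ((j : ℕ) + (k : ℕ))) ^ (2 ^ i)) := by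
      simp only [hT, hw, Finset.mul_sum]
      rw [Finset.sum_congr rfl fun i _ => sum_pow_char_pow 2 i Finset.univ _]
      rw [Finset.sum_comm]
      refine Finset.sum_congr rfl fun k _ => ?_
      refine Finset.sum_congr rfl fun i _ => ?_
      rw [pow_add]
      rw [show γ * ξ ^ (j : ℕ) * (c k * ξ ^ (k : ℕ)) = c k * (γ * (ξ ^ (j:ℕ) * ξ ^ (k:ℕ))) by ring]
      rw [mul_pow, hc_pow]
    rw [expand]
    have : ∀ k : Fin n, c k * (∑ i ∈ Finset.range n, (γ * ξ ^ ((j : ℕ) + (k : ℕ))) ^ (2 ^ i))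
        = algebraMap (ZMod 2) (AdjoinRoot h) (Q j k * v k) := by
      intro k
      rw [← hQ j k, _root_.map_mul, mul_comm]
    rw [Finset.sum_congr rfl fun k _ => this k, ← _root_.map_sum, hv j, _root_.map_zero]
  have claim2 : w = 0 := by
    by_contra hwne
    have hu : γ * w ≠ 0 := mul_ne_zero hγ hwne
    set Φ : AdjoinRoot h →ₗ[ZMod 2] AdjoinRoot h :=
      { toFun := fun x => T (γ * w * x)
        map_add' := by
          intro x y
          simp only [hT, mul_add]
          rw [← Finset.sum_add_distrib]
          exact Finset.sum_congr rfl fun i _ => add_pow_char_pow _ _ 2 i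
        map_smul' := by
          intro r x
          rcases zmod2_cases r with h0 | h1
          · simp only [h0, zero_smul, mul_zero, hT, RingHom.id_apply, smul_zero]
            exact Finset.sum_eq_zero fun i _ => zero_pow (Nat.two_pow_pos i).ne'
          · simp [h1] } with hΦ
    have hbasis : ∀ i : Fin (AdjoinRoot.powerBasis' hmonic).dim,
        Φ ((AdjoinRoot.powerBasis' hmonic).basis i) = 0 := by
      intro i
      have hi : (i : ℕ) < n :=
        Nat.lt_of_lt_of_eq i.2 (by rw [AdjoinRoot.powerBasis'_dim, hdeg])
      rw [PowerBasis.basis_eq_pow, AdjoinRoot.powerBasis'_gen]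
      have : γ * w * ξ ^ (i : ℕ) = γ * ξ ^ ((⟨(i : ℕ), hi⟩ : Fin n) : ℕ) * w := by ring
      show T (γ * w * ξ ^ (i : ℕ)) = 0
      rw [this]
      exact claim1 _
    have hΦ0 : Φ = 0 := (AdjoinRoot.powerBasis' hmonic).basis.ext fun i => by
      rw [hbasis i]; simp
    have hTzero : ∀ x : AdjoinRoot h, T x = 0 := by
      intro x
      have h1 : γ * w * ((γ * w)⁻¹ * x) = x := by
        rw [← mul_assoc, mul_inv_cancel₀ hu, one_mul]
      have h2 : Φ ((γ * w)⁻¹ * x) = 0 := by rw [hΦ0]; rfl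
      rw [hΦ, LinearMap.coe_mk, AddHom.coe_mk, h1] at h2
      exact h2
    set P : Polynomial (AdjoinRoot h) := ∑ i ∈ Finset.range n, Polynomial.X ^ (2 ^ i) with hP
    have hPeval : ∀ x : AdjoinRoot h, P.eval x = 0 := by
      intro x
      have := hTzero x
      simpa [hP, Polynomial.eval_finset_sum, hT] using this
    have hcoeff : P.coeff (2 ^ (n - 1)) = 1 := by
      simp only [hP, Polynomial.finset_sum_coeff, Polynomial.coeff_X_pow]
      have hiff : ∀ i, (2 ^ (n - 1) = 2 ^ i) ↔ n - 1 = i := fun i =>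
        ⟨fun hh => Nat.pow_right_injective (le_refl 2) hh, fun hh => by rw [hh]⟩
      rw [Finset.sum_congr rfl fun i _ => by rw [if_congr (hiff i) rfl rfl]]
      rw [Finset.sum_ite_eq (Finset.range n) (n - 1) (fun _ => (1 : AdjoinRoot h))]
      rw [if_pos (Finset.mem_range.mpr (by omega))]
    have hPne : P ≠ 0 := fun h0 => by simp [h0] at hcoeff
    haveI : Fintype (AdjoinRoot h) :=
      Module.fintypeOfFintype (AdjoinRoot.powerBasis' hmonic).basis
    have hcard : Fintype.card (AdjoinRoot h) = 2 ^ n := by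
      rw [Module.card_fintype (AdjoinRoot.powerBasis' hmonic).basis]
      simp [AdjoinRoot.powerBasis'_dim, hdeg, ZMod.card]
    have hdegP : P.natDegree < Fintype.card (AdjoinRoot h) := by
      have h1 : P.natDegree ≤ 2 ^ (n - 1) := by
        refine Polynomial.natDegree_sum_le_of_forall_le _ _ fun i hi => ?_
        rw [Polynomial.natDegree_X_pow]
        exact Nat.pow_le_pow_right two_pos (by
          have := Finset.mem_range.mp hi; omega)
      have h2 : (2 : ℕ) ^ (n - 1) < 2 ^ n := Nat.pow_lt_pow_right one_lt_two (by omega)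
      omega
    exact hPne (Polynomial.eq_zero_of_natDegree_lt_card_of_eval_eq_zero P
      Function.injective_id (fun i => hPeval i) (by simpa using hdegP))
  have hdim : (AdjoinRoot.powerBasis' hmonic).dim = n := by
    rw [AdjoinRoot.powerBasis'_dim, hdeg]
  have hsum : ∑ i : Fin (AdjoinRoot.powerBasis' hmonic).dim,
      v (Fin.cast hdim i) • (AdjoinRoot.powerBasis' hmonic).basis i = 0 := by
    have heq : ∑ i : Fin (AdjoinRoot.powerBasis' hmonic).dim,
        v (Fin.cast hdim i) • (AdjoinRoot.powerBasis' hmonic).basis i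
        = ∑ k : Fin n, c k * ξ ^ (k : ℕ) := by
      apply Fintype.sum_equiv (finCongr hdim)
      intro i
      rw [PowerBasis.basis_eq_pow, AdjoinRoot.powerBasis'_gen, Algebra.smul_def]
      rfl
    rw [heq, ← hw, claim2]
  have hli := Fintype.linearIndependent_iff.mp
    (AdjoinRoot.powerBasis' hmonic).basis.linearIndependent _ hsum
  funext k
  have := hli (Fin.cast hdim.symm k)
  simpa using this

end K12

/-- The Kerdock code is (1/√N)-incoherent: for any α, β ∈ 𝔽(2ⁿ),
ℓ, ℓ' ∈ ℤ₂ⁿ and ε, ε' ∈ ℤ₄ with (α, ℓ) ≠ (β, ℓ'), the exponentiated codewords built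
from the trace-Kerdock matrices K_α, K_β satisfy
|⟨φ_{K_α,ℓ,ε}, φ_{K_β,ℓ',ε'}⟩| ≤ 2^{−n/2} = 1/√N. -/
theorem stmt_12 (n : ℕ) (hn : 1 ≤ n) (h : Polynomial (ZMod 2))
    (hmonic : h.Monic) (hdeg : h.natDegree = n) (hirr : Irreducible h)
    (hprim : orderOf (AdjoinRoot.root h) = 2 ^ n - 1)
    (α β : AdjoinRoot h)
    (Kα Kβ : Matrix (Fin n) (Fin n) (ZMod 2))
    (hKα : ∀ j k : Fin n, algebraMap (ZMod 2) (AdjoinRoot h) (Kα j k)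
        = ∑ i ∈ Finset.range n, (α * (AdjoinRoot.root h) ^ ((j : ℕ) + (k : ℕ))) ^ (2 ^ i))
    (hKβ : ∀ j k : Fin n, algebraMap (ZMod 2) (AdjoinRoot h) (Kβ j k)
        = ∑ i ∈ Finset.range n, (β * (AdjoinRoot.root h) ^ ((j : ℕ) + (k : ℕ))) ^ (2 ^ i))
    (ℓ ℓ' : Fin n → ZMod 2) (ε ε' : ZMod 4)
    (hne : (α, ℓ) ≠ (β, ℓ')) :
    ‖herm (rmPhi n Kα ℓ ε) (rmPhi n Kβ ℓ' ε')‖ ≤ (2 : ℝ) ^ (-(n : ℝ) / 2) := by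
  classical
  haveI := Fact.mk hirr
  haveI : CharP (AdjoinRoot h) 2 :=
    charP_of_injective_algebraMap (algebraMap (ZMod 2) (AdjoinRoot h)).injective 2
  have hinj : Function.Injective (algebraMap (ZMod 2) (AdjoinRoot h)) :=
    (algebraMap (ZMod 2) (AdjoinRoot h)).injective
  set D : (Fin n → ZMod 2) → ℤ := fun y => K12.E Kα ℓ ε y - K12.E Kβ ℓ' ε' y with hD
  set S : ℂ := ∑ y : Fin n → ZMod 2, Complex.I ^ D y with hS
  -- rewrite herm
  have hherm : herm (rmPhi n Kα ℓ ε) (rmPhi n Kβ ℓ' ε') = (1 / ((2 : ℂ) ^ n)) * S := by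
    unfold herm
    rw [hS, Finset.mul_sum]
    refine Finset.sum_congr rfl fun y _ => ?_
    rw [K12.rmPhi_eq, K12.rmPhi_eq, _root_.map_mul, K12.conj_I_zpow, map_div₀, _root_.map_one,
      Complex.conj_ofReal]
    rw [show (1 / ((Real.sqrt (2 ^ n) : ℝ) : ℂ)) * Complex.I ^ K12.E Kα ℓ ε y *
        ((1 / ((Real.sqrt (2 ^ n) : ℝ) : ℂ)) * Complex.I ^ (-(K12.E Kβ ℓ' ε' y)))
      = (1 / (((Real.sqrt (2 ^ n) : ℝ) : ℂ) * ((Real.sqrt (2 ^ n) : ℝ) : ℂ))) *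
        (Complex.I ^ K12.E Kα ℓ ε y * Complex.I ^ (-(K12.E Kβ ℓ' ε' y))) from by ring]
    rw [← Complex.ofReal_mul, Real.mul_self_sqrt (by positivity), ← K12.I_zpow_add]
    rw [hD, ← sub_eq_add_neg]
    push_cast
    ring
  have habs : ‖herm (rmPhi n Kα ℓ ε) (rmPhi n Kβ ℓ' ε')‖
      = (1 / (2 : ℝ) ^ n) * ‖S‖ := by
    rw [hherm, norm_mul, norm_div, norm_one, norm_pow]
    norm_num
  have hnum : (1 / (2 : ℝ) ^ n) * Real.sqrt ((2 : ℝ) ^ n) = (2 : ℝ) ^ (-(n : ℝ) / 2) := by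
    rw [← Real.rpow_natCast 2 n, Real.sqrt_eq_rpow, ← Real.rpow_mul (by norm_num)]
    rw [one_div, ← Real.rpow_neg (by norm_num), ← Real.rpow_add (by norm_num)]
    congr 1
    ring
  by_cases hab : α = β
  · -- linear case : S = 0
    have hKK : ∀ j k, Kα j k = Kβ j k := fun j k => hinj (by rw [hKα, hKβ, hab])
    have hll : ℓ ≠ ℓ' := fun hl => hne (by rw [hab, hl])
    obtain ⟨j0, hj0⟩ := Function.ne_iff.mp hll
    have hDy : ∀ y, D y = 2 * (∑ j, ((((ℓ j).val : ℤ)) - (((ℓ' j).val : ℤ))) * K12.vv y j)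
        + (((ε.val : ℤ)) - ((ε'.val : ℤ))) := by
      intro y
      rw [hD]
      simp only [K12.E]
      have hq : ∀ j k : Fin n, K12.vv y j * ((Kα j k).val : ℤ) * K12.vv y k
          = K12.vv y j * ((Kβ j k).val : ℤ) * K12.vv y k := fun j k => by rw [hKK]
      rw [Finset.sum_congr rfl fun j _ => Finset.sum_congr rfl fun k _ => hq j k]
      rw [show ∑ j, ((((ℓ j).val : ℤ)) - (((ℓ' j).val : ℤ))) * K12.vv y j
          = (∑ j, ((ℓ j).val : ℤ) * K12.vv y j) - ∑ j, ((ℓ' j).val : ℤ) * K12.vv y j from by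
        rw [← Finset.sum_sub_distrib]
        exact Finset.sum_congr rfl fun j _ => by ring]
      ring
    have hS0 : S = 0 := by
      rw [hS]
      apply K12.sum_shift _ (Pi.single j0 1)
      intro z
      have hlin := K12.lin_expand (fun j => (((ℓ j).val : ℤ)) - (((ℓ' j).val : ℤ))) z
        (Pi.single j0 1)
      rw [K12.sum_single_right] at hlin
      set r : ℤ := ((((ℓ j0).val : ℤ)) - (((ℓ' j0).val : ℤ)))
        - 2 * ∑ j, ((((ℓ j).val : ℤ)) - (((ℓ' j).val : ℤ))) * (K12.vv z j * K12.vv (Pi.single j0 1) j)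
        with hr
      have hDze : D (z + Pi.single j0 1) = D z + 2 * r := by
        rw [hDy, hDy, hlin, hr]
        ring
      have hrodd : r % 2 = 1 := by
        have := K12.zmod2_sub_odd (ℓ j0) (ℓ' j0) hj0
        omega
      rw [hDze, K12.I_zpow_add, K12.I_zpow_two_mul, K12.neg_one_zpow_odd hrodd]
      ring
    rw [habs, hS0]
    simp only [norm_zero, mul_zero]
    positivity
  · -- quadratic case : |S| = sqrt (2^n)
    set γ : AdjoinRoot h := α + β with hγdef
    have hγ : γ ≠ 0 := by
      intro h0
      apply hab
      have hbb : β + β = 0 := CharTwo.add_self_eq_zero β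
      linear_combination h0 - hbb
    have hQmap : ∀ j k : Fin n, algebraMap (ZMod 2) (AdjoinRoot h) ((Kα + Kβ) j k)
        = ∑ i ∈ Finset.range n, (γ * (AdjoinRoot.root h) ^ ((j : ℕ) + (k : ℕ))) ^ (2 ^ i) := by
      intro j k
      rw [Matrix.add_apply, _root_.map_add, hKα, hKβ, ← Finset.sum_add_distrib]
      refine Finset.sum_congr rfl fun i _ => ?_
      rw [show γ * (AdjoinRoot.root h) ^ ((j : ℕ) + (k : ℕ))
          = α * (AdjoinRoot.root h) ^ ((j : ℕ) + (k : ℕ))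
            + β * (AdjoinRoot.root h) ^ ((j : ℕ) + (k : ℕ)) from by rw [hγdef]; ring]
      exact (add_pow_char_pow _ _ 2 i).symm
    have hAsym : ∀ j k, Kα j k = Kα k j := fun j k => hinj (by rw [hKα, hKα, Nat.add_comm])
    have hBsym : ∀ j k, Kβ j k = Kβ k j := fun j k => hinj (by rw [hKβ, hKβ, Nat.add_comm])
    have hker : ∀ v : Fin n → ZMod 2, (∀ j, ∑ k, (Kα + Kβ) j k * v k = 0) → v = 0 :=
      K12.ker_triv n hn h hmonic hdeg hirr γ hγ _ hQmap
    set gQ : (Fin n → ZMod 2) → Fin n → ℤ :=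
      fun w j => ∑ k, (((Kα + Kβ) j k).val : ℤ) * K12.vv w k with hgQ
    set e0 : ℤ := ((ε.val : ℤ)) - ((ε'.val : ℤ)) with he0
    have key : ∀ z w : Fin n → ZMod 2, Complex.I ^ (D (z + w) - D z)
        = Complex.I ^ (D w - e0) * (-1 : ℂ) ^ (∑ j, K12.vv z j * gQ w j) := by
      intro z w
      obtain ⟨s, hs⟩ := K12.D_decomp Kα Kβ hAsym hBsym ℓ ℓ' ε ε' z w
      set R : ℤ := (∑ j, ∑ k, K12.vv z j * ((Kα j k).val : ℤ) * K12.vv w k)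
        - (∑ j, ∑ k, K12.vv z j * ((Kβ j k).val : ℤ) * K12.vv w k) with hR
      have hstep : D (z + w) - D z = (D w - e0) + 2 * R + 4 * s := by
        rw [hD, he0, hR]
        linear_combination hs
      have hdvd : (2 : ℤ) ∣ R - (∑ j, K12.vv z j * gQ w j) := by
        have e1 : ∑ j, K12.vv z j * gQ w j
            = ∑ j, ∑ k, K12.vv z j * ((((Kα + Kβ) j k).val : ℤ) * K12.vv w k) := by
          exact Finset.sum_congr rfl fun j _ => Finset.mul_sum _ _ _
        rw [hR, e1]
        simp only [← Finset.sum_sub_distrib]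
        refine Finset.dvd_sum fun j _ => Finset.dvd_sum fun k _ => ?_
        have hent := K12.zmod2_entry (Kα j k) (Kβ j k)
        rw [show Kα j k + Kβ j k = (Kα + Kβ) j k from (Matrix.add_apply _ _ _ _).symm] at hent
        obtain ⟨t, ht⟩ := hent
        exact ⟨K12.vv z j * K12.vv w k * t, by linear_combination (K12.vv z j * K12.vv w k) * ht⟩
      rw [hstep, K12.I_zpow_add, K12.I_zpow_add, K12.I_zpow_two_mul, K12.I_zpow_four_mul,
        mul_one, K12.neg_one_zpow_congr hdvd]
    have hcardV : Fintype.card (Fin n → ZMod 2) = 2 ^ n := by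
      simp [ZMod.card]
    have hSconj : S * (starRingEnd ℂ) S = ((2 : ℂ) ^ n) := by
      rw [hS, _root_.map_sum]
      rw [Finset.sum_congr rfl fun z _ => K12.conj_I_zpow (D z)]
      rw [Finset.sum_mul_sum]
      rw [Finset.sum_congr rfl fun y _ =>
        Finset.sum_congr rfl fun z _ => (K12.I_zpow_add (D y) (-(D z))).symm]
      rw [Finset.sum_comm]
      have hre : ∀ z : Fin n → ZMod 2, ∑ y : Fin n → ZMod 2, Complex.I ^ (D y + -(D z))
          = ∑ w : Fin n → ZMod 2, Complex.I ^ (D (z + w) - D z) := by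
        intro z
        refine (Fintype.sum_equiv (Equiv.addLeft z) _ _ fun w => ?_).symm
        simp only [Equiv.coe_addLeft]
        rw [sub_eq_add_neg]
      rw [Finset.sum_congr rfl fun z _ => hre z]
      rw [Finset.sum_comm]
      rw [Finset.sum_congr rfl fun w _ => Finset.sum_congr rfl fun z _ => key z w]
      rw [Finset.sum_congr rfl fun w _ => (Finset.mul_sum _ _ _).symm]
      rw [Fintype.sum_eq_single (0 : Fin n → ZMod 2) ?_]
      · have hD0 : D 0 = e0 := by
          simp only [hD, he0]
          rw [K12.E_zero, K12.E_zero]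
        have hg0 : ∀ z : Fin n → ZMod 2, (∑ j, K12.vv z j * gQ (0 : Fin n → ZMod 2) j) = 0 :=
          fun z => Finset.sum_eq_zero fun j _ => by
            simp [hgQ, K12.vv_zero]
        rw [hD0, sub_self, zpow_zero, one_mul]
        rw [Finset.sum_congr rfl fun z _ => by rw [hg0 z, zpow_zero]]
        rw [Finset.sum_const, Finset.card_univ, hcardV]
        simp
      · intro w hw
        have hj0 : ∃ j0, ∑ k, (Kα + Kβ) j0 k * w k ≠ 0 := by
          by_contra hcon
          push_neg at hcon
          exact hw (hker w hcon)
        obtain ⟨j0, hj0ne⟩ := hj0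
        have hj0one : ∑ k, (Kα + Kβ) j0 k * w k = 1 := K12.zmod2_ne_zero _ hj0ne
        have hcast : ((gQ w j0 : ℤ) : ZMod 2) = 1 := by
          simp only [hgQ, K12.vv]
          rw [Int.cast_sum]
          rw [Finset.sum_congr rfl fun k _ => by
            rw [Int.cast_mul, K12.zmod2_intCast_val ((Kα + Kβ) j0 k),
              K12.zmod2_intCast_val (w k)]]
          exact hj0one
        have hodd : gQ w j0 % 2 = 1 := by
          have hz : ((gQ w j0 - 1 : ℤ) : ZMod 2) = 0 := by
            push_cast [hcast]
            ring
          have := (ZMod.intCast_zmod_eq_zero_iff_dvd _ 2).mp hz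
          omega
        rw [K12.inner_sum (gQ w) j0 hodd, mul_zero]
    have habsS : ‖S‖ = Real.sqrt ((2 : ℝ) ^ n) := by
      have h1 : ((Complex.normSq S : ℝ) : ℂ) = ((2 : ℂ) ^ n) := by
        rw [← Complex.mul_conj]
        exact hSconj
      have h2 : Complex.normSq S = (2 : ℝ) ^ n := by exact_mod_cast h1
      rw [Complex.norm_def, h2]
    rw [habs, habsS, hnum]
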